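/- Let φ ∈ BMO(ℝ^n) and δ > 0. Partition ℝ^n into half-open cubes Q_j of side length δ with vertex set δℤ^n, and set h(x) = Σ_j φ_{Q_j} χ_{Q_j}(x), where φ_{Q_j} is the mean of φ over Q_j. Then ‖φ - h‖_* ≤ C(n) M_{2δ}(φ), where M_{2δ}(φ) = sup_{ℓ(Q)≤2δ} (1/|Q|)∫_Q |φ - φ_Q| and C(n) depends only on n. -/

import Mathlib

open MeasureTheory Real Set Filter

/-- Open axis-parallel cube with corner `c` and side length `l`. -/
def cube {n : ℕ} (c : EuclideanSpace ℝ (Fin n)) (l : ℝ) : Set (EuclideanSpace ℝ (Fin n)) :=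
  {x | ∀ i, x i ∈ Set.Ioo (c i) (c i + l)}

/-- Mean of `f` over the cube with corner `c` and side length `l`. -/
noncomputable def cubeAvg {n : ℕ} (f : EuclideanSpace ℝ (Fin n) → ℝ)
    (c : EuclideanSpace ℝ (Fin n)) (l : ℝ) : ℝ :=
  (∫ x in cube c l, f x) / l ^ n

/-- Mean oscillation of `f` over the cube with corner `c` and side length `l`. -/
noncomputable def cubeOsc {n : ℕ} (f : EuclideanSpace ℝ (Fin n) → ℝ)
    (c : EuclideanSpace ℝ (Fin n)) (l : ℝ) : ℝ :=
  (∫ x in cube c l, |f x - cubeAvg f c l|) / l ^ n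

/-- `f ∈ BMO(ℝⁿ)`. -/
def IsBMO {n : ℕ} (f : EuclideanSpace ℝ (Fin n) → ℝ) : Prop :=
  LocallyIntegrable f ∧ ∃ C, ∀ c l, 0 < l → cubeOsc f c l ≤ C

/-- `f ∈ VMO(ℝⁿ)`. -/
def IsVMO {n : ℕ} (f : EuclideanSpace ℝ (Fin n) → ℝ) : Prop :=
  IsBMO f ∧ ∀ ε > (0 : ℝ), ∃ δ > (0 : ℝ), ∀ c l, 0 < l → l ≤ δ → cubeOsc f c l ≤ ε

/-- The `BMO` seminorm `‖f‖_*`. -/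
noncomputable def bmoNorm {n : ℕ} (f : EuclideanSpace ℝ (Fin n) → ℝ) : ℝ :=
  sInf {C : ℝ | 0 ≤ C ∧ ∀ c l, 0 < l → cubeOsc f c l ≤ C}

/-- Half-open axis-parallel cube with corner `c` and side length `l`. -/
def cubeIco {n : ℕ} (c : EuclideanSpace ℝ (Fin n)) (l : ℝ) : Set (EuclideanSpace ℝ (Fin n)) :=
  {x | ∀ i, x i ∈ Set.Ico (c i) (c i + l)}

/-- The corner of the half-open grid cube of side `δ` (with vertex set `δℤⁿ`) containing `x`. -/
noncomputable def gridCorner {n : ℕ} (δ : ℝ) (x : EuclideanSpace ℝ (Fin n)) :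
    EuclideanSpace ℝ (Fin n) :=
  (EuclideanSpace.equiv (Fin n) ℝ).symm fun i => δ * (⌊x i / δ⌋ : ℤ)

/-- The step function `h = Σ_j φ_{Q_j} χ_{Q_j}` built from the grid of half-open cubes of
side `δ`: at `x` it equals the mean of `φ` over the grid cube containing `x`. -/
noncomputable def gridFn {n : ℕ} (φ : EuclideanSpace ℝ (Fin n) → ℝ) (δ : ℝ)
    (x : EuclideanSpace ℝ (Fin n)) : ℝ :=
  (∫ y in cubeIco (gridCorner δ x) δ, φ y) / δ ^ n

/-! ### Auxiliary material -/

section Aux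

variable {n : ℕ}

lemma measurable_coord (i : Fin n) : Measurable fun x : EuclideanSpace ℝ (Fin n) => x i :=
  (measurable_pi_apply i).comp (WithLp.measurable_ofLp 2 _)

lemma volume_forall_pi {s : Fin n → Set ℝ} (hs : ∀ i, MeasurableSet (s i)) :
    volume {x : EuclideanSpace ℝ (Fin n) | ∀ i, x i ∈ s i} = ∏ i, volume (s i) := by
  have h1 : {x : EuclideanSpace ℝ (Fin n) | ∀ i, x i ∈ s i}
      = (MeasurableEquiv.toLp 2 (Fin n → ℝ)).symm ⁻¹' (Set.pi univ s) := by
    ext x; simp [Set.mem_pi, MeasurableEquiv.coe_toLp_symm]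
  rw [h1, (EuclideanSpace.volume_preserving_symm_measurableEquiv_toLp (Fin n)).measure_preimage
    ((MeasurableSet.univ_pi hs).nullMeasurableSet), volume_pi_pi]

lemma volume_cube (c : EuclideanSpace ℝ (Fin n)) (l : ℝ) :
    volume (cube c l) = ENNReal.ofReal l ^ n := by
  rw [show cube c l = {x : EuclideanSpace ℝ (Fin n) | ∀ i, x i ∈ Set.Ioo (c i) (c i + l)} from rfl,
    volume_forall_pi (fun i => measurableSet_Ioo)]
  simp [Real.volume_Ioo]

lemma volume_cubeIco (c : EuclideanSpace ℝ (Fin n)) (l : ℝ) :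
    volume (cubeIco c l) = ENNReal.ofReal l ^ n := by
  rw [show cubeIco c l = {x : EuclideanSpace ℝ (Fin n) | ∀ i, x i ∈ Set.Ico (c i) (c i + l)}
      from rfl,
    volume_forall_pi (fun i => measurableSet_Ico)]
  simp [Real.volume_Ico]

lemma measurableSet_cube (c : EuclideanSpace ℝ (Fin n)) (l : ℝ) : MeasurableSet (cube c l) := by
  have h : cube c l
      = ⋂ i, (fun x : EuclideanSpace ℝ (Fin n) => x i) ⁻¹' Set.Ioo (c i) (c i + l) := by
    ext x; simp [cube]
  rw [h]; exact MeasurableSet.iInter fun i => (measurable_coord i) measurableSet_Ioo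

lemma measurableSet_cubeIco (c : EuclideanSpace ℝ (Fin n)) (l : ℝ) :
    MeasurableSet (cubeIco c l) := by
  have h : cubeIco c l
      = ⋂ i, (fun x : EuclideanSpace ℝ (Fin n) => x i) ⁻¹' Set.Ico (c i) (c i + l) := by
    ext x; simp [cubeIco]
  rw [h]; exact MeasurableSet.iInter fun i => (measurable_coord i) measurableSet_Ico

lemma volume_coord_eq (i : Fin n) (a : ℝ) :
    volume {x : EuclideanSpace ℝ (Fin n) | x i = a} = 0 := by
  have h : {x : EuclideanSpace ℝ (Fin n) | x i = a}
      = {x : EuclideanSpace ℝ (Fin n) | ∀ j, x j ∈ (fun j => if j = i then {a} else univ) j} := by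
    ext x
    constructor
    · intro hx j
      rcases eq_or_ne j i with hj | hj
      · subst hj; simpa using hx
      · simp [hj]
    · intro hx
      have := hx i; simpa using this
  rw [h, volume_forall_pi (fun j => by by_cases hj : j = i <;> simp [hj])]
  exact Finset.prod_eq_zero (Finset.mem_univ i) (by simp)

lemma cubeIco_ae_eq (c : EuclideanSpace ℝ (Fin n)) (l : ℝ) :
    cubeIco c l =ᵐ[volume] cube c l := by
  rw [Filter.eventuallyEq_set]
  have h0 : volume (⋃ i, {x : EuclideanSpace ℝ (Fin n) | x i = c i}) = 0 :=
    measure_iUnion_null fun i => volume_coord_eq i (c i)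
  filter_upwards [measure_eq_zero_iff_ae_notMem.mp h0] with x hx
  simp only [mem_iUnion, mem_setOf_eq, not_exists] at hx
  constructor
  · intro h i
    exact ⟨lt_of_le_of_ne (h i).1 (Ne.symm (hx i)), (h i).2⟩
  · intro h i
    exact ⟨(h i).1.le, (h i).2⟩

/-- corner of the grid cube indexed by `k` -/
noncomputable def gCorner (δ : ℝ) (k : Fin n → ℤ) : EuclideanSpace ℝ (Fin n) :=
  (EuclideanSpace.equiv (Fin n) ℝ).symm fun i => δ * (k i : ℝ)

lemma gCorner_apply (δ : ℝ) (k : Fin n → ℤ) (i : Fin n) : gCorner δ k i = δ * (k i : ℝ) := rfl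

lemma gridCorner_eq_gCorner (δ : ℝ) (x : EuclideanSpace ℝ (Fin n)) :
    gridCorner δ x = gCorner δ (fun i => ⌊x i / δ⌋) := rfl

/-- mean of `φ` over the grid cube indexed by `k` -/
noncomputable def gAvg (φ : EuclideanSpace ℝ (Fin n) → ℝ) (δ : ℝ) (k : Fin n → ℤ) : ℝ :=
  (∫ y in cubeIco (gCorner δ k) δ, φ y) / δ ^ n

lemma gridFn_eq_gAvg (φ : EuclideanSpace ℝ (Fin n) → ℝ) (δ : ℝ) (x : EuclideanSpace ℝ (Fin n)) :
    gridFn φ δ x = gAvg φ δ (fun i => ⌊x i / δ⌋) := rfl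

lemma gAvg_eq_cubeAvg (φ : EuclideanSpace ℝ (Fin n) → ℝ) (δ : ℝ) (k : Fin n → ℤ) :
    gAvg φ δ k = cubeAvg φ (gCorner δ k) δ := by
  rw [gAvg, cubeAvg, setIntegral_congr_set (cubeIco_ae_eq _ _)]

lemma mem_cubeIco_gridCorner {δ : ℝ} (hδ : 0 < δ) (x : EuclideanSpace ℝ (Fin n)) :
    x ∈ cubeIco (gridCorner δ x) δ := by
  intro i
  have h1 : (⌊x i / δ⌋ : ℝ) ≤ x i / δ := Int.floor_le _
  have h2 : x i / δ < ⌊x i / δ⌋ + 1 := Int.lt_floor_add_one _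
  have e1 : δ * (⌊x i / δ⌋ : ℝ) ≤ x i := by
    have := mul_le_mul_of_nonneg_left h1 hδ.le
    rwa [mul_div_cancel₀ _ hδ.ne'] at this
  have e2 : x i < δ * (⌊x i / δ⌋ : ℝ) + δ := by
    have := mul_lt_mul_of_pos_left h2 hδ
    rw [mul_add, mul_one] at this
    rwa [mul_div_cancel₀ _ hδ.ne'] at this
  exact ⟨e1, e2⟩

lemma floor_eq_of_mem {δ : ℝ} (hδ : 0 < δ) {k : Fin n → ℤ} {x : EuclideanSpace ℝ (Fin n)}
    (hx : x ∈ cubeIco (gCorner δ k) δ) (i : Fin n) : ⌊x i / δ⌋ = k i := by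
  obtain ⟨h1, h2⟩ := hx i
  rw [gCorner_apply] at h1 h2
  rw [Int.floor_eq_iff]
  constructor
  · rwa [le_div_iff₀ hδ, mul_comm]
  · rw [div_lt_iff₀ hδ]; push_cast; linarith [h2]

lemma gridCorner_eq_of_mem {δ : ℝ} (hδ : 0 < δ) {k : Fin n → ℤ} {x : EuclideanSpace ℝ (Fin n)}
    (hx : x ∈ cubeIco (gCorner δ k) δ) : gridCorner δ x = gCorner δ k := by
  have h : (fun i => ⌊x i / δ⌋) = k := funext fun i => floor_eq_of_mem hδ hx i
  rw [gridCorner_eq_gCorner, h]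

lemma gridFn_eq_of_mem {φ : EuclideanSpace ℝ (Fin n) → ℝ} {δ : ℝ} (hδ : 0 < δ)
    {k : Fin n → ℤ} {x : EuclideanSpace ℝ (Fin n)} (hx : x ∈ cubeIco (gCorner δ k) δ) :
    gridFn φ δ x = gAvg φ δ k := by
  have h : (fun i => ⌊x i / δ⌋) = k := funext fun i => floor_eq_of_mem hδ hx i
  rw [gridFn_eq_gAvg, h]

lemma measurable_gridFn (φ : EuclideanSpace ℝ (Fin n) → ℝ) (δ : ℝ) :
    Measurable (gridFn φ δ) := by
  have h1 : Measurable fun x : EuclideanSpace ℝ (Fin n) => (fun i => (⌊x i / δ⌋ : ℤ)) :=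
    measurable_pi_lambda _ fun i => Int.measurable_floor.comp ((measurable_coord i).div_const δ)
  have h2 : gridFn φ δ = (fun k : Fin n → ℤ => gAvg φ δ k) ∘ (fun x i => ⌊x i / δ⌋) := rfl
  rw [h2]
  exact (measurable_of_countable _).comp h1

lemma isCompact_IccCube (c : EuclideanSpace ℝ (Fin n)) (l : ℝ) :
    IsCompact {x : EuclideanSpace ℝ (Fin n) | ∀ i, x i ∈ Set.Icc (c i) (c i + l)} := by
  have h : {x : EuclideanSpace ℝ (Fin n) | ∀ i, x i ∈ Set.Icc (c i) (c i + l)}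
      = (EuclideanSpace.equiv (Fin n) ℝ).toHomeomorph ⁻¹'
        (Set.pi univ fun i => Set.Icc (c i) (c i + l)) := by
    ext x; simp [Set.mem_pi, Pi.le_def, forall_and]
  rw [h, Homeomorph.isCompact_preimage]
  exact isCompact_univ_pi fun i => isCompact_Icc

lemma integrableOn_cube {φ : EuclideanSpace ℝ (Fin n) → ℝ} (hφ : LocallyIntegrable φ)
    (c : EuclideanSpace ℝ (Fin n)) (l : ℝ) : IntegrableOn φ (cube c l) :=
  (hφ.integrableOn_isCompact (isCompact_IccCube c l)).mono_set
    (fun _ hx i => ⟨(hx i).1.le, (hx i).2.le⟩)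

lemma integrableOn_cubeIco {φ : EuclideanSpace ℝ (Fin n) → ℝ} (hφ : LocallyIntegrable φ)
    (c : EuclideanSpace ℝ (Fin n)) (l : ℝ) : IntegrableOn φ (cubeIco c l) :=
  (hφ.integrableOn_isCompact (isCompact_IccCube c l)).mono_set
    (fun _ hx i => ⟨(hx i).1, (hx i).2.le⟩)

lemma cube_volume_lt_top (c : EuclideanSpace ℝ (Fin n)) (l : ℝ) : volume (cube c l) < ⊤ := by
  rw [volume_cube]
  exact ENNReal.pow_lt_top ENNReal.ofReal_lt_top

lemma cubeIco_volume_lt_top (c : EuclideanSpace ℝ (Fin n)) (l : ℝ) :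
    volume (cubeIco c l) < ⊤ := by
  rw [volume_cubeIco]
  exact ENNReal.pow_lt_top ENNReal.ofReal_lt_top

lemma toReal_volume_cube (c : EuclideanSpace ℝ (Fin n)) {l : ℝ} (hl : 0 ≤ l) :
    (volume (cube c l)).toReal = l ^ n := by
  rw [volume_cube, ← ENNReal.ofReal_pow hl, ENNReal.toReal_ofReal (by positivity)]

lemma toReal_volume_cubeIco (c : EuclideanSpace ℝ (Fin n)) {l : ℝ} (hl : 0 ≤ l) :
    (volume (cubeIco c l)).toReal = l ^ n := by
  rw [volume_cubeIco, ← ENNReal.ofReal_pow hl, ENNReal.toReal_ofReal (by positivity)]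

lemma integrableOn_const_cube (c : EuclideanSpace ℝ (Fin n)) (l : ℝ) (b : ℝ) :
    IntegrableOn (fun _ => b) (cube c l) volume :=
  integrableOn_const (cube_volume_lt_top c l).ne

lemma integrableOn_const_cubeIco (c : EuclideanSpace ℝ (Fin n)) (l : ℝ) (b : ℝ) :
    IntegrableOn (fun _ => b) (cubeIco c l) volume :=
  integrableOn_const (cubeIco_volume_lt_top c l).ne

lemma setIntegral_const_cube (c : EuclideanSpace ℝ (Fin n)) {l : ℝ} (hl : 0 ≤ l) (b : ℝ) :
    ∫ _ in cube c l, b = b * l ^ n := by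
  rw [setIntegral_const, measureReal_def, toReal_volume_cube c hl, smul_eq_mul, mul_comm]

lemma setIntegral_const_cubeIco (c : EuclideanSpace ℝ (Fin n)) {l : ℝ} (hl : 0 ≤ l) (b : ℝ) :
    ∫ _ in cubeIco c l, b = b * l ^ n := by
  rw [setIntegral_const, measureReal_def, toReal_volume_cubeIco c hl, smul_eq_mul, mul_comm]

lemma cubeOsc_nonneg (f : EuclideanSpace ℝ (Fin n) → ℝ) (c : EuclideanSpace ℝ (Fin n))
    {l : ℝ} (hl : 0 < l) : 0 ≤ cubeOsc f c l :=
  div_nonneg (integral_nonneg fun _ => abs_nonneg _) (by positivity)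

lemma cubeOsc_le_const (f : EuclideanSpace ℝ (Fin n) → ℝ) (c : EuclideanSpace ℝ (Fin n))
    {l : ℝ} (hl : 0 < l) (hf : IntegrableOn f (cube c l)) (a : ℝ) :
    cubeOsc f c l ≤ 2 * ((∫ x in cube c l, |f x - a|) / l ^ n) := by
  have hln : (0:ℝ) < l ^ n := by positivity
  set m := cubeAvg f c l with hm
  set I := ∫ x in cube c l, |f x - a| with hI
  have hint : IntegrableOn (fun x => f x - a) (cube c l) := hf.sub (integrableOn_const_cube c l a)
  have hInonneg : 0 ≤ I := integral_nonneg fun x => abs_nonneg _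
  have key : |m - a| * l ^ n ≤ I := by
    have h1 : m - a = (∫ x in cube c l, (f x - a)) / l ^ n := by
      rw [integral_sub hf (integrableOn_const_cube c l a), setIntegral_const_cube c hl.le a, hm,
        cubeAvg]
      field_simp
    have h2 : |∫ x in cube c l, (f x - a)| ≤ I := by
      simpa [Real.norm_eq_abs] using
        norm_integral_le_integral_norm (μ := volume.restrict (cube c l)) (fun x => f x - a)
    rw [h1, abs_div, abs_of_pos hln, div_mul_cancel₀ _ hln.ne']
    exact h2
  have step : ∫ x in cube c l, |f x - m| ≤ I + |m - a| * l ^ n := by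
    have hle : ∀ x, |f x - m| ≤ |f x - a| + |m - a| := by
      intro x
      rw [show f x - m = (f x - a) - (m - a) by ring]
      exact abs_sub _ _
    calc ∫ x in cube c l, |f x - m| ≤ ∫ x in cube c l, (|f x - a| + |m - a|) :=
          integral_mono (hf.sub (integrableOn_const_cube c l m)).abs
            (hint.abs.add (integrableOn_const_cube c l _)) hle
      _ = I + |m - a| * l ^ n := by
          rw [integral_add hint.abs (integrableOn_const_cube c l _),
            setIntegral_const_cube c hl.le]
  have step2 : ∫ x in cube c l, |f x - m| ≤ 2 * I := by linarith
  calc cubeOsc f c l = (∫ x in cube c l, |f x - m|) / l ^ n := rfl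
    _ ≤ (2 * I) / l ^ n := by gcongr
    _ = 2 * (I / l ^ n) := by rw [mul_div_assoc]

end Aux

/-- Let `φ ∈ BMO(ℝⁿ)` and `δ > 0`, and let `h` be the step function whose value on each grid
cube `Q_j` of side `δ` is the mean `φ_{Q_j}`. Then `‖φ - h‖_* ≤ C(n) M_{2δ}(φ)`, where
`M_{2δ}(φ)` is the supremum of the mean oscillation of `φ` over cubes of side at most `2δ`. -/
theorem bmo_grid_approximation (n : ℕ) :
    ∃ C > (0 : ℝ), ∀ (φ : EuclideanSpace ℝ (Fin n) → ℝ) (δ B : ℝ),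
      LocallyIntegrable φ → 0 < δ →
      (∀ c l, 0 < l → l ≤ 2 * δ → cubeOsc φ c l ≤ B) →
      ∀ c l, 0 < l → cubeOsc (fun x => φ x - gridFn φ δ x) c l ≤ C * B := by
  refine ⟨2 * 3 ^ n + 2 ^ (n + 1) + 2, by positivity, ?_⟩
  intro φ δ B hφ hδ hB c l hl
  have hB0 : 0 ≤ B := le_trans (cubeOsc_nonneg φ c hδ) (hB c δ hδ (by linarith))
  have hδn : (0:ℝ) < δ ^ n := by positivity
  have hln : (0:ℝ) < l ^ n := by positivity
  -- integral form of the oscillation hypothesis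
  have hosc' : ∀ (c' : EuclideanSpace ℝ (Fin n)) (l' : ℝ), 0 < l' → l' ≤ 2 * δ →
      ∫ x in cube c' l', |φ x - cubeAvg φ c' l'| ≤ B * l' ^ n := by
    intro c' l' h1 h2
    have h := hB c' l' h1 h2
    rw [cubeOsc, div_le_iff₀ (by positivity)] at h
    exact h
  -- oscillation over grid cubes
  have hosc_grid : ∀ k : Fin n → ℤ,
      ∫ y in cubeIco (gCorner δ k) δ, |φ y - gAvg φ δ k| ≤ B * δ ^ n := by
    intro k
    rw [setIntegral_congr_set (cubeIco_ae_eq _ _), gAvg_eq_cubeAvg]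
    exact hosc' (gCorner δ k) δ hδ (by linarith)
  -- the indices of grid cubes meeting `cube c l`
  set kl : Fin n → ℤ := fun i => ⌊c i / δ⌋ with hkl
  set ku : Fin n → ℤ := fun i => ⌊(c i + l) / δ⌋ with hku
  set K : Finset (Fin n → ℤ) := Finset.Icc kl ku with hK
  have hmemK : ∀ x ∈ cube c l, (fun i => ⌊x i / δ⌋) ∈ K := by
    intro x hx
    rw [hK, Finset.mem_Icc]
    constructor
    · intro i
      exact Int.floor_le_floor (by gcongr; exact (hx i).1.le)
    · intro i
      exact Int.floor_le_floor (by gcongr; exact (hx i).2.le)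
  have hKne : K.Nonempty := Finset.nonempty_Icc.mpr
    (fun i => Int.floor_le_floor (by gcongr; linarith))
  -- `gridFn` is integrable on `cube c l`
  set M : ℝ := K.sup' hKne fun k => |gAvg φ δ k| with hM
  have hbound : ∀ x ∈ cube c l, |gridFn φ δ x| ≤ M := by
    intro x hx
    rw [gridFn_eq_gAvg]
    exact Finset.le_sup' (fun k => |gAvg φ δ k|) (hmemK x hx)
  have hgint : IntegrableOn (gridFn φ δ) (cube c l) := by
    apply Measure.integrableOn_of_bounded (M := M) (cube_volume_lt_top c l).ne
      (measurable_gridFn φ δ).aestronglyMeasurable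
    filter_upwards [ae_restrict_mem (measurableSet_cube c l)] with x hx
    simpa [Real.norm_eq_abs] using hbound x hx
  have hφQ : IntegrableOn φ (cube c l) := integrableOn_cube hφ c l
  have hgQ : IntegrableOn (fun x => φ x - gridFn φ δ x) (cube c l) := hφQ.sub hgint
  rcases le_or_gt l δ with hlδ | hlδ
  · -- small cubes: `l ≤ δ`
    set kc : Fin n → ℤ := fun i => ⌈c i / δ⌉ - 1 with hkc
    set ct : EuclideanSpace ℝ (Fin n) := gCorner δ kc with hct
    set T : ℝ := cubeAvg φ ct (2 * δ) with hT
    have hsub : ∀ x ∈ cube c l,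
        cubeIco (gCorner δ fun i => ⌊x i / δ⌋) δ ⊆ cubeIco ct (2 * δ) := by
      intro x hx y hy i
      have h1 : c i < x i := (hx i).1
      have h2 : x i < c i + l := (hx i).2
      have hc1 : c i / δ ≤ ⌈c i / δ⌉ := Int.le_ceil _
      have hc2 : (⌈c i / δ⌉ : ℝ) < c i / δ + 1 := Int.ceil_lt_add_one _
      have hf1 : (⌊x i / δ⌋ : ℝ) ≤ x i / δ := Int.floor_le _
      have hf2 : x i / δ < ⌊x i / δ⌋ + 1 := Int.lt_floor_add_one _
      have hcx : c i / δ < x i / δ := by gcongr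
      have hxc : x i / δ < c i / δ + 1 := by
        rw [div_lt_iff₀ hδ, add_mul, one_mul]
        rw [div_mul_cancel₀ _ hδ.ne']
        linarith
      have hk1 : ((⌈c i / δ⌉ : ℤ) : ℝ) - 1 ≤ (⌊x i / δ⌋ : ℝ) := by
        have : (⌈c i / δ⌉ : ℤ) ≤ ⌊x i / δ⌋ + 1 := by
          have : (⌈c i / δ⌉ : ℤ) < ⌊x i / δ⌋ + 2 := by
            rw [← @Int.cast_lt ℝ]
            push_cast
            linarith
          omega
        have h' : ((⌈c i / δ⌉ : ℤ) : ℝ) ≤ ((⌊x i / δ⌋ + 1 : ℤ) : ℝ) := by exact_mod_cast this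
        push_cast at h'
        linarith
      have hk2 : (⌊x i / δ⌋ : ℝ) ≤ (⌈c i / δ⌉ : ℝ) := by
        have : (⌊x i / δ⌋ : ℤ) < ⌈c i / δ⌉ + 1 := by
          rw [← @Int.cast_lt ℝ]
          push_cast
          linarith
        have h' := Int.lt_add_one_iff.mp this
        exact_mod_cast h'
      obtain ⟨hy1, hy2⟩ := hy i
      rw [gCorner_apply] at hy1 hy2
      rw [hct]
      constructor
      · rw [gCorner_apply, hkc]
        push_cast
        nlinarith
      · rw [gCorner_apply, hkc]
        push_cast
        nlinarith
    have hTbound : ∀ x ∈ cube c l, |gridFn φ δ x - T| ≤ 2 ^ n * B := by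
      intro x hx
      rw [gridFn_eq_gAvg]
      set k : Fin n → ℤ := fun i => ⌊x i / δ⌋ with hk
      have hQk : IntegrableOn φ (cubeIco (gCorner δ k) δ) := integrableOn_cubeIco hφ _ _
      have e1 : gAvg φ δ k - T = (∫ y in cubeIco (gCorner δ k) δ, (φ y - T)) / δ ^ n := by
        rw [integral_sub hQk (integrableOn_const_cubeIco _ _ _),
          setIntegral_const_cubeIco _ hδ.le, gAvg]
        field_simp
      have e2 : |∫ y in cubeIco (gCorner δ k) δ, (φ y - T)|
          ≤ ∫ y in cubeIco (gCorner δ k) δ, |φ y - T| := by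
        simpa [Real.norm_eq_abs] using
          norm_integral_le_integral_norm (μ := volume.restrict (cubeIco (gCorner δ k) δ))
            (fun y => φ y - T)
      have e3 : ∫ y in cubeIco (gCorner δ k) δ, |φ y - T|
          ≤ ∫ y in cubeIco ct (2 * δ), |φ y - T| := by
        apply setIntegral_mono_set
          (((integrableOn_cubeIco hφ ct (2 * δ)).sub
            (integrableOn_const_cubeIco _ _ _)).abs)
          (Eventually.of_forall fun y => abs_nonneg _)
          (HasSubset.Subset.eventuallyLE (hsub x hx))
      have e4 : ∫ y in cubeIco ct (2 * δ), |φ y - T| ≤ B * (2 * δ) ^ n := by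
        rw [setIntegral_congr_set (cubeIco_ae_eq _ _), hT]
        exact hosc' ct (2 * δ) (by linarith) (le_refl _)
      rw [e1, abs_div, abs_of_pos hδn, div_le_iff₀ hδn]
      calc |∫ y in cubeIco (gCorner δ k) δ, (φ y - T)| ≤ B * (2 * δ) ^ n :=
            le_trans e2 (le_trans e3 e4)
        _ = 2 ^ n * B * δ ^ n := by rw [mul_pow]; ring
    -- combine
    have main := cubeOsc_le_const (fun x => φ x - gridFn φ δ x) c hl hgQ (cubeAvg φ c l - T)
    have step1 : ∫ x in cube c l, |(φ x - gridFn φ δ x) - (cubeAvg φ c l - T)|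
        ≤ ∫ x in cube c l, (|φ x - cubeAvg φ c l| + |gridFn φ δ x - T|) := by
      apply setIntegral_mono_on
        (hgQ.sub (integrableOn_const_cube c l _)).abs
        (((hφQ.sub (integrableOn_const_cube c l _)).abs).add
          ((hgint.sub (integrableOn_const_cube c l _)).abs))
        (measurableSet_cube c l)
      intro x _
      simp only [Pi.sub_apply, Pi.add_apply]
      rw [← hT]
      rw [show (φ x - gridFn φ δ x) - (cubeAvg φ c l - T)
          = (φ x - cubeAvg φ c l) - (gridFn φ δ x - T) by ring]
      exact abs_sub _ _
    have step2 : ∫ x in cube c l, (|φ x - cubeAvg φ c l| + |gridFn φ δ x - T|)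
        = (∫ x in cube c l, |φ x - cubeAvg φ c l|) + ∫ x in cube c l, |gridFn φ δ x - T| :=
      integral_add (hφQ.sub (integrableOn_const_cube c l _)).abs
        (hgint.sub (integrableOn_const_cube c l _)).abs
    have step3 : ∫ x in cube c l, |φ x - cubeAvg φ c l| ≤ B * l ^ n :=
      hosc' c l hl (by linarith)
    have step4 : ∫ x in cube c l, |gridFn φ δ x - T| ≤ (2 ^ n * B) * l ^ n := by
      calc ∫ x in cube c l, |gridFn φ δ x - T| ≤ ∫ _ in cube c l, (2 ^ n * B : ℝ) :=
            setIntegral_mono_on (hgint.sub (integrableOn_const_cube c l _)).abs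
              (integrableOn_const_cube c l _) (measurableSet_cube c l)
              (fun x hx => hTbound x hx)
        _ = (2 ^ n * B) * l ^ n := setIntegral_const_cube c hl.le _
    have hintle : ∫ x in cube c l, |(φ x - gridFn φ δ x) - (cubeAvg φ c l - T)|
        ≤ (B + 2 ^ n * B) * l ^ n := by
      rw [step2] at step1
      nlinarith
    calc cubeOsc (fun x => φ x - gridFn φ δ x) c l
        ≤ 2 * ((∫ x in cube c l, |(φ x - gridFn φ δ x) - (cubeAvg φ c l - T)|) / l ^ n) := main
      _ ≤ 2 * (((B + 2 ^ n * B) * l ^ n) / l ^ n) := by gcongr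
      _ = (2 + 2 ^ (n + 1)) * B := by
          rw [mul_div_assoc, div_self hln.ne', mul_one]
          ring
      _ ≤ (2 * 3 ^ n + 2 ^ (n + 1) + 2) * B := by
          have h3 : (0:ℝ) ≤ 2 * 3 ^ n * B := by positivity
          nlinarith
  · -- large cubes: `δ < l`
    have hcover : cube c l = ⋃ k ∈ K, (cube c l ∩ cubeIco (gCorner δ k) δ) := by
      apply Subset.antisymm
      · intro x hx
        have h1 : x ∈ cubeIco (gCorner δ fun i => ⌊x i / δ⌋) δ := mem_cubeIco_gridCorner hδ x
        exact Set.mem_biUnion (hmemK x hx) ⟨hx, h1⟩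
      · exact Set.iUnion₂_subset fun k _ => inter_subset_left
    have hdisj : Set.Pairwise (↑K) (Function.onFun Disjoint fun k => cube c l ∩ cubeIco (gCorner δ k) δ) := by
      intro k1 _ k2 _ hne
      simp only [Function.onFun]
      rw [Set.disjoint_left]
      rintro x ⟨_, hx1⟩ ⟨_, hx2⟩
      exact hne (funext fun i => (floor_eq_of_mem hδ hx1 i).symm.trans (floor_eq_of_mem hδ hx2 i))
    have hintk : ∀ k ∈ K, IntegrableOn (fun x => |φ x - gridFn φ δ x|)
        (cube c l ∩ cubeIco (gCorner δ k) δ) volume :=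
      fun k _ => MeasureTheory.IntegrableOn.mono_set hgQ.abs inter_subset_left
    have hsum : ∫ x in cube c l, |φ x - gridFn φ δ x|
        = ∑ k ∈ K, ∫ x in cube c l ∩ cubeIco (gCorner δ k) δ, |φ x - gridFn φ δ x| := by
      conv_lhs => rw [hcover]
      exact integral_biUnion_finset K
        (fun k _ => (measurableSet_cube c l).inter (measurableSet_cubeIco _ _)) hdisj hintk
    have hterm : ∀ k ∈ K, ∫ x in cube c l ∩ cubeIco (gCorner δ k) δ, |φ x - gridFn φ δ x|
        ≤ B * δ ^ n := by
      intro k hk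
      have he : ∀ x ∈ cube c l ∩ cubeIco (gCorner δ k) δ,
          |φ x - gridFn φ δ x| = |φ x - gAvg φ δ k| := by
        intro x hx
        rw [gridFn_eq_of_mem hδ hx.2]
      calc ∫ x in cube c l ∩ cubeIco (gCorner δ k) δ, |φ x - gridFn φ δ x|
          = ∫ x in cube c l ∩ cubeIco (gCorner δ k) δ, |φ x - gAvg φ δ k| :=
            setIntegral_congr_fun
              ((measurableSet_cube c l).inter (measurableSet_cubeIco _ _)) he
        _ ≤ ∫ x in cubeIco (gCorner δ k) δ, |φ x - gAvg φ δ k| :=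
            setIntegral_mono_set
              (((integrableOn_cubeIco hφ _ _).sub (integrableOn_const_cubeIco _ _ _)).abs)
              (Eventually.of_forall fun y => abs_nonneg _)
              (HasSubset.Subset.eventuallyLE inter_subset_right)
        _ ≤ B * δ ^ n := hosc_grid k
    have hcard : (K.card : ℝ) ≤ (3 * l / δ) ^ n := by
      have hper : ∀ i : Fin n, ((Finset.Icc (kl i) (ku i)).card : ℝ) ≤ 3 * l / δ := by
        intro i
        rw [Int.card_Icc]
        have f1 : (ku i : ℝ) ≤ c i / δ + l / δ := by
          rw [hku]
          calc ((⌊(c i + l) / δ⌋ : ℤ) : ℝ) ≤ (c i + l) / δ := Int.floor_le _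
            _ = c i / δ + l / δ := add_div _ _ _
        have f2 : c i / δ - 1 < (kl i : ℝ) := Int.sub_one_lt_floor _
        have f3 : (1:ℝ) ≤ l / δ := (one_le_div hδ).mpr hlδ.le
        have hz : ((ku i + 1 - kl i : ℤ) : ℝ) ≤ 3 * l / δ := by
          push_cast
          have : 3 * l / δ = 3 * (l / δ) := by ring
          rw [this]
          linarith
        rcases le_or_gt (ku i + 1 - kl i) 0 with h | h
        · rw [Int.toNat_of_nonpos h]
          have : (0:ℝ) ≤ 3 * l / δ := by positivity
          simpa using this
        · have hc2 : ((ku i + 1 - kl i).toNat : ℤ) = ku i + 1 - kl i := Int.toNat_of_nonneg h.le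
          rw [show ((ku i + 1 - kl i).toNat : ℝ) = (((ku i + 1 - kl i).toNat : ℤ) : ℝ) by
            push_cast; ring, hc2]
          exact hz
      calc (K.card : ℝ) = ∏ i, ((Finset.Icc (kl i) (ku i)).card : ℝ) := by
            rw [hK, Pi.card_Icc]; push_cast; rfl
        _ ≤ ∏ _i : Fin n, (3 * l / δ) :=
            Finset.prod_le_prod (fun i _ => Nat.cast_nonneg _) (fun i _ => hper i)
        _ = (3 * l / δ) ^ n := by rw [Finset.prod_const, Finset.card_fin]
    have total : ∫ x in cube c l, |φ x - gridFn φ δ x| ≤ 3 ^ n * B * l ^ n := by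
      rw [hsum]
      calc ∑ k ∈ K, ∫ x in cube c l ∩ cubeIco (gCorner δ k) δ, |φ x - gridFn φ δ x|
          ≤ ∑ _k ∈ K, B * δ ^ n := Finset.sum_le_sum hterm
        _ = (K.card : ℝ) * (B * δ ^ n) := by rw [Finset.sum_const, nsmul_eq_mul]
        _ ≤ (3 * l / δ) ^ n * (B * δ ^ n) := by
            have : (0:ℝ) ≤ B * δ ^ n := by positivity
            exact mul_le_mul_of_nonneg_right hcard this
        _ = 3 ^ n * B * l ^ n := by
            rw [div_pow, mul_pow]
            field_simp
    have main := cubeOsc_le_const (fun x => φ x - gridFn φ δ x) c hl hgQ 0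
    simp only [sub_zero] at main
    calc cubeOsc (fun x => φ x - gridFn φ δ x) c l
        ≤ 2 * ((∫ x in cube c l, |φ x - gridFn φ δ x|) / l ^ n) := main
      _ ≤ 2 * ((3 ^ n * B * l ^ n) / l ^ n) := by gcongr
      _ = 2 * 3 ^ n * B := by
          rw [mul_div_assoc, div_self hln.ne', mul_one]
          ring
      _ ≤ (2 * 3 ^ n + 2 ^ (n + 1) + 2) * B := by
          have h2 : (0:ℝ) ≤ (2 ^ (n + 1) + 2) * B := by positivity
          nlinarith
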